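/- Let X be a finite alphabet and P₀, P₁ two distinct probability distributions on X with full support. For ρ ∈ [0,1] define the tilted distribution P_ρ(x) = P₀(x)^{1-ρ} P₁(x)^ρ / Σ_{x'} P₀(x')^{1-ρ} P₁(x')^ρ. Then for any e₀ ∈ (0, D(P₁‖P₀)], inf{ D(Q‖P₁) : Q ∈ P(X), D(Q‖P₀) < e₀ } = inf{ D(Q‖P₁) : Q ∈ P(X), D(Q‖P₀) ≤ e₀ }, and this infimum is attained by Q = P_ρ for some ρ ∈ [0,1]. -/

import Mathlib

open scoped BigOperators

/-- KL divergence (base-2 logarithms) between finitely supported distributions. -/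
noncomputable def KL {X : Type*} [Fintype X] (P Q : X → ℝ) : ℝ :=
  ∑ x, P x * Real.logb 2 (P x / Q x)

/-- `P` is a probability distribution on the finite alphabet `X`. -/
def IsProb {X : Type*} [Fintype X] (P : X → ℝ) : Prop :=
  (∀ x, 0 ≤ P x) ∧ ∑ x, P x = 1


open Real Set


lemma KL_nonneg {X : Type*} [Fintype X] {Q P : X → ℝ} (hQ : IsProb Q) (hP : IsProb P)
    (hPpos : ∀ x, 0 < P x) : 0 ≤ KL Q P := by
  have key : ∀ x, Q x - P x ≤ Q x * Real.log (Q x / P x) := by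
    intro x
    rcases eq_or_lt_of_le (hQ.1 x) with h | h
    · simp [← h]; linarith [(hPpos x).le]
    · have h1 : Real.log (P x / Q x) ≤ P x / Q x - 1 :=
        Real.log_le_sub_one_of_pos (div_pos (hPpos x) h)
      have h2 : Real.log (P x / Q x) = - Real.log (Q x / P x) := by
        rw [← Real.log_inv, inv_div]
      have h3 : 1 - P x / Q x ≤ Real.log (Q x / P x) := by rw [h2] at h1; linarith
      have := mul_le_mul_of_nonneg_left h3 h.le
      calc Q x - P x = Q x * (1 - P x / Q x) := by field_simp
        _ ≤ Q x * Real.log (Q x / P x) := this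
  have hsum : 0 ≤ ∑ x, Q x * Real.log (Q x / P x) := by
    have h := Finset.sum_le_sum (s := Finset.univ) (fun x _ => key x)
    rw [Finset.sum_sub_distrib, hQ.2, hP.2] at h
    linarith
  unfold KL
  have : ∀ x, Q x * Real.logb 2 (Q x / P x) = (Q x * Real.log (Q x / P x)) / Real.log 2 := by
    intro x; rw [Real.logb]; ring
  rw [Finset.sum_congr rfl (fun x _ => this x), ← Finset.sum_div]
  positivity

lemma KL_self {X : Type*} [Fintype X] {P : X → ℝ} (hPpos : ∀ x, 0 < P x) : KL P P = 0 := by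
  unfold KL
  have : ∀ x : X, P x * Real.logb 2 (P x / P x) = 0 := by
    intro x; rw [div_self (hPpos x).ne', Real.logb_one, mul_zero]
  simp [this]

lemma logb_rpow' {x : ℝ} (y : ℝ) (hx : 0 < x) : Real.logb 2 (x ^ y) = y * Real.logb 2 x := by
  rw [Real.logb, Real.log_rpow hx, Real.logb]; ring

lemma tilt_identity {X : Type*} [Fintype X] [Nonempty X] (P₀ P₁ Q : X → ℝ)
    (h₀ : ∀ x, 0 < P₀ x) (h₁ : ∀ x, 0 < P₁ x) (hQ : IsProb Q) (ρ : ℝ) :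
    KL Q (fun x => P₀ x ^ (1-ρ) * P₁ x ^ ρ / ∑ x', P₀ x' ^ (1-ρ) * P₁ x' ^ ρ)
      = (1-ρ) * KL Q P₀ + ρ * KL Q P₁
        + Real.logb 2 (∑ x', P₀ x' ^ (1-ρ) * P₁ x' ^ ρ) := by
  set Z : ℝ := ∑ x', P₀ x' ^ (1-ρ) * P₁ x' ^ ρ with hZdef
  have hZ : 0 < Z := Finset.sum_pos (fun x _ =>
    mul_pos (Real.rpow_pos_of_pos (h₀ x) _) (Real.rpow_pos_of_pos (h₁ x) _)) Finset.univ_nonempty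
  have key : ∀ x, Q x * Real.logb 2 (Q x / (P₀ x ^ (1-ρ) * P₁ x ^ ρ / Z))
      = (1-ρ) * (Q x * Real.logb 2 (Q x / P₀ x)) + ρ * (Q x * Real.logb 2 (Q x / P₁ x))
        + Q x * Real.logb 2 Z := by
    intro x
    rcases eq_or_lt_of_le (hQ.1 x) with h | h
    · simp [← h]
    · have hA : (0:ℝ) < P₀ x ^ (1-ρ) * P₁ x ^ ρ :=
        mul_pos (Real.rpow_pos_of_pos (h₀ x) _) (Real.rpow_pos_of_pos (h₁ x) _)
      rw [div_div_eq_mul_div, Real.logb_div (by positivity) hA.ne',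
        Real.logb_mul h.ne' hZ.ne', Real.logb_mul (Real.rpow_pos_of_pos (h₀ x) _).ne'
          (Real.rpow_pos_of_pos (h₁ x) _).ne',
        logb_rpow' _ (h₀ x), logb_rpow' _ (h₁ x),
        Real.logb_div h.ne' (h₀ x).ne', Real.logb_div h.ne' (h₁ x).ne']
      ring
  unfold KL
  rw [Finset.sum_congr rfl (fun x _ => key x)]
  rw [Finset.sum_add_distrib, Finset.sum_add_distrib, ← Finset.mul_sum, ← Finset.mul_sum,
    ← Finset.sum_mul, hQ.2, one_mul]

lemma KL_convex_bound {X : Type*} [Fintype X] {A B P : X → ℝ} (hA : IsProb A) (hB : IsProb B)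
    (hP : ∀ x, 0 < P x) {t : ℝ} (ht0 : 0 ≤ t) (ht1 : t ≤ 1) :
    KL (fun x => (1-t) * A x + t * B x) P ≤ (1-t) * KL A P + t * KL B P := by
  have hlog2 : (0:ℝ) < Real.log 2 := Real.log_pos (by norm_num)
  have expand : ∀ y : ℝ, 0 ≤ y → ∀ p : ℝ, 0 < p →
      y * Real.logb 2 (y / p) = (y * Real.log y - y * Real.log p) / Real.log 2 := by
    intro y hy p hp
    rcases eq_or_lt_of_le hy with h | h
    · simp [← h]
    · rw [Real.logb, Real.log_div h.ne' hp.ne']; ring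
  have key : ∀ x, ((1-t) * A x + t * B x) * Real.logb 2 (((1-t) * A x + t * B x) / P x)
      ≤ (1-t) * (A x * Real.logb 2 (A x / P x)) + t * (B x * Real.logb 2 (B x / P x)) := by
    intro x
    have ha := hA.1 x; have hb := hB.1 x
    have hc : 0 ≤ (1-t) * A x + t * B x := by nlinarith
    have hconv := (Real.convexOn_mul_log.2 (Set.mem_Ici.2 ha) (Set.mem_Ici.2 hb)
      (by linarith : (0:ℝ) ≤ 1 - t) ht0 (by ring)) 
    simp only [smul_eq_mul] at hconv
    rw [expand _ hc _ (hP x), expand _ ha _ (hP x), expand _ hb _ (hP x)]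
    rw [div_le_iff₀ hlog2]
    have e1 : ((1-t) * (A x * Real.log (A x) - A x * Real.log (P x)) / Real.log 2
        + t * (B x * Real.log (B x) - B x * Real.log (P x)) / Real.log 2) * Real.log 2
        = (1-t) * (A x * Real.log (A x)) + t * (B x * Real.log (B x))
          - ((1-t) * A x + t * B x) * Real.log (P x) := by
      field_simp; ring
    calc ((1-t) * A x + t * B x) * Real.log ((1-t) * A x + t * B x)
          - ((1-t) * A x + t * B x) * Real.log (P x)
        ≤ (1-t) * (A x * Real.log (A x)) + t * (B x * Real.log (B x))
          - ((1-t) * A x + t * B x) * Real.log (P x) := by nlinarith [hconv]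
      _ = _ := by rw [← e1]; ring_nf
  calc KL (fun x => (1-t) * A x + t * B x) P
      ≤ ∑ x, ((1-t) * (A x * Real.logb 2 (A x / P x)) + t * (B x * Real.logb 2 (B x / P x))) :=
        Finset.sum_le_sum (fun x _ => key x)
    _ = (1-t) * KL A P + t * KL B P := by
        rw [Finset.sum_add_distrib, ← Finset.mul_sum, ← Finset.mul_sum]; rfl

/-- Binary hypothesis testing trade-off: for `e₀ ∈ (0, D(P₁‖P₀)]`, the strict
and non-strict constrained infima coincide, and the infimum is attained by a
tilted distribution `P_ρ` for some `ρ ∈ [0,1]`. -/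
theorem stmt8 {X : Type*} [Fintype X] (P₀ P₁ : X → ℝ)
    (hP₀ : IsProb P₀) (hP₁ : IsProb P₁)
    (h₀ : ∀ x, 0 < P₀ x) (h₁ : ∀ x, 0 < P₁ x) (hne : P₀ ≠ P₁)
    (e₀ : ℝ) (he₀ : e₀ ∈ Set.Ioc 0 (KL P₁ P₀)) :
    sInf {v | ∃ Q : X → ℝ, IsProb Q ∧ KL Q P₀ < e₀ ∧ v = KL Q P₁}
      = sInf {v | ∃ Q : X → ℝ, IsProb Q ∧ KL Q P₀ ≤ e₀ ∧ v = KL Q P₁} ∧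
    ∃ ρ ∈ Set.Icc (0:ℝ) 1,
      KL (fun x => P₀ x ^ (1-ρ) * P₁ x ^ ρ /
            ∑ x', P₀ x' ^ (1-ρ) * P₁ x' ^ ρ) P₀ ≤ e₀ ∧
      KL (fun x => P₀ x ^ (1-ρ) * P₁ x ^ ρ /
            ∑ x', P₀ x' ^ (1-ρ) * P₁ x' ^ ρ) P₁
        = sInf {v | ∃ Q : X → ℝ, IsProb Q ∧ KL Q P₀ ≤ e₀ ∧ v = KL Q P₁} := by
  obtain ⟨he0pos, he0le⟩ := he₀
  have hX : Nonempty X := by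
    by_contra h
    rw [not_nonempty_iff] at h
    have h2 := hP₀.2
    rw [Finset.univ_eq_empty, Finset.sum_empty] at h2
    norm_num at h2
  -- the tilted family
  set T : ℝ → X → ℝ := fun ρ x => P₀ x ^ (1-ρ) * P₁ x ^ ρ / ∑ x', P₀ x' ^ (1-ρ) * P₁ x' ^ ρ
    with hTdef
  have hZpos : ∀ ρ : ℝ, 0 < ∑ x', P₀ x' ^ (1-ρ) * P₁ x' ^ ρ := fun ρ =>
    Finset.sum_pos (fun x _ =>
      mul_pos (Real.rpow_pos_of_pos (h₀ x) _) (Real.rpow_pos_of_pos (h₁ x) _))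
      Finset.univ_nonempty
  have hTpos : ∀ ρ x, 0 < T ρ x := fun ρ x =>
    div_pos (mul_pos (Real.rpow_pos_of_pos (h₀ x) _) (Real.rpow_pos_of_pos (h₁ x) _)) (hZpos ρ)
  have hTprob : ∀ ρ, IsProb (T ρ) := by
    intro ρ
    refine ⟨fun x => (hTpos ρ x).le, ?_⟩
    rw [hTdef]
    rw [← Finset.sum_div, div_self (hZpos ρ).ne']
  have hT0 : T 0 = P₀ := by
    funext x
    have : ∀ y : X, P₀ y ^ (1-(0:ℝ)) * P₁ y ^ (0:ℝ) = P₀ y := by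
      intro y; rw [sub_zero, Real.rpow_one, Real.rpow_zero, mul_one]
    simp only [hTdef, this, hP₀.2, div_one]
  have hT1 : T 1 = P₁ := by
    funext x
    have : ∀ y : X, P₀ y ^ (1-(1:ℝ)) * P₁ y ^ (1:ℝ) = P₁ y := by
      intro y; rw [sub_self, Real.rpow_zero, Real.rpow_one, one_mul]
    simp only [hTdef, this, hP₁.2, div_one]
  -- continuity of ρ ↦ KL (T ρ) P₀
  have contT : ∀ x, Continuous (fun ρ : ℝ => P₀ x ^ (1-ρ) * P₁ x ^ ρ) := by
    intro x
    have : (fun ρ : ℝ => P₀ x ^ (1-ρ) * P₁ x ^ ρ)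
        = fun ρ => Real.exp (Real.log (P₀ x) * (1-ρ)) * Real.exp (Real.log (P₁ x) * ρ) := by
      funext ρ; rw [Real.rpow_def_of_pos (h₀ x), Real.rpow_def_of_pos (h₁ x)]
    rw [this]; fun_prop
  have contZ : Continuous (fun ρ : ℝ => ∑ x', P₀ x' ^ (1-ρ) * P₁ x' ^ ρ) :=
    continuous_finset_sum _ (fun x _ => contT x)
  have contTx : ∀ x, Continuous (fun ρ : ℝ => T ρ x) := fun x =>
    (contT x).div contZ (fun ρ => (hZpos ρ).ne')
  have contg : Continuous (fun ρ : ℝ => KL (T ρ) P₀) := by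
    unfold KL
    refine continuous_finset_sum _ (fun x _ => ?_)
    refine (contTx x).mul ?_
    have : (fun ρ : ℝ => Real.logb 2 (T ρ x / P₀ x))
        = fun ρ : ℝ => Real.log (T ρ x / P₀ x) / Real.log 2 := rfl
    rw [this]
    exact (((contTx x).div_const _).log
      (fun ρ => (div_pos (hTpos ρ x) (h₀ x)).ne')).div_const _
  -- IVT
  have himg := intermediate_value_Icc (zero_le_one) contg.continuousOn
  have hmem : e₀ ∈ Icc (KL (T 0) P₀) (KL (T 1) P₀) := by
    rw [hT0, hT1, KL_self h₀]
    exact ⟨he0pos.le, he0le⟩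
  obtain ⟨ρ, hρmem, hρeq⟩ := himg hmem
  have hρpos : 0 < ρ := by
    rcases eq_or_lt_of_le hρmem.1 with h | h
    · exfalso
      rw [← h] at hρeq
      simp only at hρeq
      rw [hT0, KL_self h₀] at hρeq
      linarith
    · exact h
  simp only at hρeq
  -- optimal value
  set L := KL (T ρ) P₁ with hLdef
  have hid : ∀ Q : X → ℝ, IsProb Q → KL Q (T ρ)
      = (1-ρ) * KL Q P₀ + ρ * KL Q P₁
        + Real.logb 2 (∑ x', P₀ x' ^ (1-ρ) * P₁ x' ^ ρ) :=
    fun Q hQ => tilt_identity P₀ P₁ Q h₀ h₁ hQ ρ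
  have hLB : ∀ Q : X → ℝ, IsProb Q → KL Q P₀ ≤ e₀ → L ≤ KL Q P₁ := by
    intro Q hQ hcon
    have i1 := hid Q hQ
    have i2 := hid (T ρ) (hTprob ρ)
    rw [KL_self (hTpos ρ), hρeq, ← hLdef] at i2
    have h3 : 0 ≤ KL Q (T ρ) := KL_nonneg hQ (hTprob ρ) (hTpos ρ)
    have h4 : (1-ρ) * KL Q P₀ ≤ (1-ρ) * e₀ :=
      mul_le_mul_of_nonneg_left hcon (by linarith [hρmem.2])
    have h5 : ρ * L ≤ ρ * KL Q P₁ := by linarith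
    exact le_of_mul_le_mul_left h5 hρpos
  set Sns := {v | ∃ Q : X → ℝ, IsProb Q ∧ KL Q P₀ ≤ e₀ ∧ v = KL Q P₁} with hSns
  set Ss := {v | ∃ Q : X → ℝ, IsProb Q ∧ KL Q P₀ < e₀ ∧ v = KL Q P₁} with hSs
  have hbddns : BddBelow Sns := by
    refine ⟨0, fun v hv => ?_⟩
    obtain ⟨Q, hQ, _, rfl⟩ := hv
    exact KL_nonneg hQ hP₁ h₁
  have hbdds : BddBelow Ss := by
    refine ⟨0, fun v hv => ?_⟩
    obtain ⟨Q, hQ, _, rfl⟩ := hv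
    exact KL_nonneg hQ hP₁ h₁
  have hnsL : sInf Sns = L := by
    apply le_antisymm
    · exact csInf_le hbddns ⟨T ρ, hTprob ρ, le_of_eq hρeq, rfl⟩
    · refine le_csInf ⟨L, T ρ, hTprob ρ, le_of_eq hρeq, rfl⟩ ?_
      rintro v ⟨Q, hQ, hc, rfl⟩
      exact hLB Q hQ hc
  have hsL : sInf Ss = L := by
    apply le_antisymm
    · -- limit argument
      set f : ℝ → ℝ := fun t => KL (fun x => (1-t) * T ρ x + t * P₀ x) P₁ with hfdef
      have hf0 : f 0 = L := by
        rw [hfdef]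
        simp only [sub_zero, one_mul, zero_mul, add_zero]
        rfl
      have hmemf : ∀ t ∈ Set.Ioc (0:ℝ) 1, f t ∈ Ss := by
        intro t ht
        have hprob : IsProb (fun x => (1-t) * T ρ x + t * P₀ x) := by
          constructor
          · intro x
            show 0 ≤ (1-t) * T ρ x + t * P₀ x
            have h1 : (0:ℝ) ≤ 1 - t := by linarith [ht.2]
            exact add_nonneg (mul_nonneg h1 (hTpos ρ x).le) (mul_nonneg ht.1.le (h₀ x).le)
          · rw [Finset.sum_add_distrib, ← Finset.mul_sum, ← Finset.mul_sum,
              (hTprob ρ).2, hP₀.2]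
            ring
        have hcb := KL_convex_bound (hTprob ρ) hP₀ h₀ ht.1.le ht.2
        rw [KL_self h₀, hρeq] at hcb
        have hlt : KL (fun x => (1-t) * T ρ x + t * P₀ x) P₀ < e₀ := by nlinarith [ht.1]
        exact ⟨_, hprob, hlt, rfl⟩
      have hub : ∀ t ∈ Set.Ioc (0:ℝ) 1, sInf Ss ≤ f t := fun t ht =>
        csInf_le hbdds (hmemf t ht)
      have hcontf : ContinuousAt f 0 := by
        have : ∀ x : X, ContinuousAt (fun t : ℝ =>
            ((1-t) * T ρ x + t * P₀ x) * Real.logb 2 (((1-t) * T ρ x + t * P₀ x) / P₁ x))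
            0 := by
          intro x
          have cq : ContinuousAt (fun t : ℝ => (1-t) * T ρ x + t * P₀ x) 0 := by fun_prop
          have hq0 : ((1-(0:ℝ)) * T ρ x + 0 * P₀ x) / P₁ x ≠ 0 := by
            rw [sub_zero, one_mul, zero_mul, add_zero]
            exact (div_pos (hTpos ρ x) (h₁ x)).ne'
          refine cq.mul ?_
          have : (fun t : ℝ => Real.logb 2 (((1-t) * T ρ x + t * P₀ x) / P₁ x))
              = fun t => Real.log (((1-t) * T ρ x + t * P₀ x) / P₁ x) / Real.log 2 := rfl
          rw [this]
          exact ((cq.div_const _).log hq0).div_const _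
        exact tendsto_finset_sum _ (fun x _ => this x)
      have htend : Filter.Tendsto f (nhdsWithin 0 (Set.Ioi (0:ℝ))) (nhds L) := by
        rw [← hf0]
        exact hcontf.continuousWithinAt.tendsto
      have hev : ∀ᶠ t in nhdsWithin 0 (Set.Ioi (0:ℝ)), sInf Ss ≤ f t := by
        filter_upwards [Ioc_mem_nhdsGT (zero_lt_one : (0:ℝ) < 1)]
          with t ht using hub t ht
      exact ge_of_tendsto htend hev
    · refine le_csInf ⟨KL P₀ P₁, P₀, hP₀, by rw [KL_self h₀]; exact he0pos, rfl⟩ ?_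
      rintro v ⟨Q, hQ, hc, rfl⟩
      exact hLB Q hQ hc.le
  refine ⟨by rw [hsL, hnsL], ρ, hρmem, ?_, ?_⟩
  · exact le_of_eq hρeq
  · rw [hnsL]
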